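/- The number of partitions of n into distinct parts with exactly k chains equals the number of partitions of n into odd parts with exactly k different parts. -/

import Mathlib

open Nat

/-- The parts of a partition listed in nonincreasing order. -/
def sortedParts {n : ℕ} (p : n.Partition) : List ℕ := (p.parts.sort (· ≤ ·)).reverse

/-- `lo p` is the number of odd parts of `p` (with multiplicity). -/
def lo {n : ℕ} (p : n.Partition) : ℕ := (p.parts.filter (fun i => i % 2 = 1)).card

/-- `la p` is the alternating sum `λ₁ - λ₂ + λ₃ - ⋯` of the partition `p`. -/
def la {n : ℕ} (p : n.Partition) : ℤ :=
  ∑ i ∈ Finset.range (sortedParts p).length, (-1 : ℤ) ^ i * ((sortedParts p).getD i 0 : ℤ)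

/-- `nd p` is the number of distinct part-values of `p`. -/
def nd {n : ℕ} (p : n.Partition) : ℕ := p.parts.toFinset.card

/-- `no p` is the number of distinct part-values of `p` occurring with odd multiplicity. -/
def no {n : ℕ} (p : n.Partition) : ℕ :=
  (p.parts.toFinset.filter (fun a => p.parts.count a % 2 = 1)).card

/-- `nc p` is the number of chains (maximal runs of consecutive integers) of a
partition with distinct parts: parts `i` such that `i+1` is not a part. -/
def nc {n : ℕ} (p : n.Partition) : ℕ :=
  (p.parts.toFinset.filter (fun i => i + 1 ∉ p.parts)).card

/-- `r2 p` is the number of parts of `p` congruent to 2 mod 4. -/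
def r2 {n : ℕ} (p : n.Partition) : ℕ := (p.parts.filter (fun i => i % 4 = 2)).card

/-- Only even parts may be repeated. -/
def onlyEvenRepeats {n : ℕ} (p : n.Partition) : Prop :=
  ∀ i, 1 < p.parts.count i → 2 ∣ i

/-- Successive parts differ by at most 4, strictly less than 4 if either part is even,
and the smallest part is less than 4 (the class 𝒜₁ of Chen–Gao–Ji–Li). -/
def A1cond {n : ℕ} (p : n.Partition) : Prop :=
  onlyEvenRepeats p ∧
  (∀ j, j + 1 < (sortedParts p).length →
    (sortedParts p).getD j 0 ≤ (sortedParts p).getD (j + 1) 0 + 4 ∧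
    ((2 ∣ (sortedParts p).getD j 0 ∨ 2 ∣ (sortedParts p).getD (j + 1) 0) →
      (sortedParts p).getD j 0 < (sortedParts p).getD (j + 1) 0 + 4)) ∧
  (sortedParts p).getD ((sortedParts p).length - 1) 0 < 4

/-- No part divisible by 4 and only even parts repeated (the class 𝒜₂). -/
def A2cond {n : ℕ} (p : n.Partition) : Prop :=
  (∀ i ∈ p.parts, ¬ (4 ∣ i)) ∧ onlyEvenRepeats p

/-- `loConj p` is the number of odd parts of the conjugate partition of `p`. -/
def loConj {n : ℕ} (p : n.Partition) : ℕ :=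
  ((Finset.Icc 1 n).filter (fun i => (p.parts.filter (fun j => i ≤ j)).card % 2 = 1)).card

namespace Syl

def phi : List ℕ → List ℕ
  | [] => []
  | a :: t =>
    if a = 1 then [t.length + 1]
    else ((a + 1) / 2 + t.length) ::
      ((a - 1) / 2 + (t.filter (fun x => 3 ≤ x)).length) ::
      phi ((t.filter (fun x => 3 ≤ x)).map (fun x => x - 2))
  termination_by l => l.length
  decreasing_by
    simp only [List.length_map]
    exact Nat.lt_succ_of_le ((List.length_filter_le _ _).trans_eq List.length_attach)

def psi : List ℕ → List ℕ
  | [] => []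
  | [x] => List.replicate x 1
  | x :: y :: r =>
    (2 * (y - (psi r).length) + 1) ::
      (((psi r).map (fun v => v + 2)) ++
        List.replicate (x - (y - (psi r).length) - 1 - (psi r).length) 1)

def cL : List ℕ → ℕ
  | [] => 0
  | [_] => 1
  | x :: y :: r => (if y + 1 < x then 1 else 0) + cL (y :: r)

def OddL (l : List ℕ) : Prop := l.Pairwise (· ≥ ·) ∧ ∀ x ∈ l, x % 2 = 1

def DistL (l : List ℕ) : Prop := l.Pairwise (· > ·) ∧ ∀ x ∈ l, 0 < x

lemma oddL_tail {a : ℕ} {t : List ℕ} (h : OddL (a :: t)) : OddL t :=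
  ⟨(List.pairwise_cons.1 h.1).2, fun x hx => h.2 x (by simp [hx])⟩

lemma oddL_le {a : ℕ} {t : List ℕ} (h : OddL (a :: t)) : ∀ x ∈ t, x ≤ a :=
  fun _ hb => List.rel_of_pairwise_cons h.1 hb

lemma oddL_head {a : ℕ} {t : List ℕ} (h : OddL (a :: t)) : a % 2 = 1 :=
  h.2 a (by simp)

lemma oddL_filter_map {a : ℕ} {t : List ℕ} (h : OddL (a :: t)) :
    OddL ((t.filter (fun x => 3 ≤ x)).map (fun x => x - 2)) := by
  constructor
  · exact List.Pairwise.map _ (fun a b hab => Nat.sub_le_sub_right hab 2)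
      (((oddL_tail h).1).filter _)
  · intro x hx
    simp only [List.mem_map, List.mem_filter, decide_eq_true_eq] at hx
    obtain ⟨y, ⟨hyt, hy3⟩, rfl⟩ := hx
    have := (oddL_tail h).2 y hyt
    omega

lemma all_ones {t : List ℕ} (h : OddL (1 :: t)) : t = List.replicate t.length 1 := by
  rw [List.eq_replicate_length]
  intro b hb
  have h1 := oddL_le h b hb
  have h2 := (oddL_tail h).2 b hb
  omega

lemma sum_map_sub {l : List ℕ} (h : ∀ x ∈ l, 2 ≤ x) :
    (l.map (fun x => x - 2)).sum + 2 * l.length = l.sum := by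
  induction l with
  | nil => simp
  | cons x t ih =>
    have := h x (by simp)
    have := ih (fun y hy => h y (by simp [hy]))
    simp only [List.map_cons, List.sum_cons, List.length_cons]
    omega

lemma sum_filter_odd {t : List ℕ} (h : ∀ x ∈ t, x % 2 = 1) :
    (t.filter (fun x => 3 ≤ x)).sum + (t.length - (t.filter (fun x => 3 ≤ x)).length) = t.sum := by
  induction t with
  | nil => simp
  | cons x t ih =>
    have hx := h x (by simp)
    have ihh := ih (fun y hy => h y (by simp [hy]))
    have hlf := List.length_filter_le (fun x => decide (3 ≤ x)) t
    by_cases h3 : 3 ≤ x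
    · rw [List.filter_cons_of_pos (by simp [h3])]
      simp only [List.sum_cons, List.length_cons]
      omega
    · have hx1 : x = 1 := by omega
      rw [List.filter_cons_of_neg (by simp [h3])]
      simp only [List.sum_cons, List.length_cons]
      omega

lemma one_mem_iff {t : List ℕ} (h : ∀ x ∈ t, x % 2 = 1) :
    1 ∈ t ↔ (t.filter (fun x => 3 ≤ x)).length < t.length := by
  induction t with
  | nil => simp
  | cons x t ih =>
    have hx := h x (by simp)
    have ihh := ih (fun y hy => h y (by simp [hy]))
    have hlf := List.length_filter_le (fun x => decide (3 ≤ x)) t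
    by_cases h3 : 3 ≤ x
    · rw [List.filter_cons_of_pos (by simp [h3])]
      simp only [List.length_cons, List.mem_cons]
      constructor
      · rintro (h1 | h1)
        · omega
        · exact Nat.succ_lt_succ (ihh.1 h1)
      · intro hlt
        right; exact ihh.2 (by omega)
    · have hx1 : x = 1 := by omega
      subst hx1
      rw [List.filter_cons_of_neg (by simp [h3])]
      simp only [List.length_cons, List.mem_cons]
      constructor
      · intro _; omega
      · intro _; simp


lemma phi_one (t : List ℕ) : phi (1 :: t) = [t.length + 1] := by
  rw [phi]; simp

lemma phi_cons {a : ℕ} (t : List ℕ) (h : a ≠ 1) :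
    phi (a :: t) = ((a + 1) / 2 + t.length) ::
      ((a - 1) / 2 + (t.filter (fun x => 3 ≤ x)).length) ::
      phi ((t.filter (fun x => 3 ≤ x)).map (fun x => x - 2)) := by
  rw [phi]; simp [h]

lemma phi_head (c : ℕ) (s : List ℕ) :
    (phi (c :: s)).head? = some ((c + 1) / 2 + s.length) := by
  by_cases h : c = 1
  · subst h; rw [phi_one]; simp; omega
  · rw [phi_cons _ h]; rfl

lemma phi_nil : phi [] = [] := by rw [phi]

lemma phi_ne_nil (c : ℕ) (s : List ℕ) : phi (c :: s) ≠ [] := by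
  by_cases h : c = 1
  · subst h; rw [phi_one]; simp
  · rw [phi_cons _ h]; simp

lemma sum_phi : ∀ l : List ℕ, OddL l → (phi l).sum = l.sum := by
  intro l
  induction l using phi.induct with
  | case1 => simp [phi]
  | case2 t =>
    intro h
    rw [phi_one, all_ones h]
    simp [List.sum_replicate]
    omega
  | case3 a t ha ih =>
    simp only [List.map_subtype, List.unattach_filter (p := (· ∈ t)) (f := fun x => decide (3 ≤ x.1)) (g := fun x => decide (3 ≤ x)) (hf := fun _ _ => rfl), List.unattach_attach] at ih
    intro h
    have ha2 := oddL_head h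
    have ha3 : 3 ≤ a := by omega
    have ht := oddL_tail h
    have ihs := ih (oddL_filter_map h)
    rw [phi_cons _ ha]
    simp only [List.sum_cons, ihs]
    have h1 := sum_map_sub (l := t.filter (fun x => 3 ≤ x))
      (fun x hx => by
        simp only [List.mem_filter, decide_eq_true_eq] at hx; omega)
    have h2 := sum_filter_odd ht.2
    have h3 := List.length_filter_le (fun x => decide (3 ≤ x)) t
    omega

lemma distL_phi : ∀ l : List ℕ, OddL l → DistL (phi l) := by
  intro l
  induction l using phi.induct with
  | case1 => intro _; exact ⟨by simp [phi], by simp [phi]⟩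
  | case2 t =>
    intro _
    rw [phi_one]
    exact ⟨List.pairwise_singleton _ _, by simp⟩
  | case3 a t ha ih =>
    simp only [List.map_subtype, List.unattach_filter (p := (· ∈ t)) (f := fun x => decide (3 ≤ x.1)) (g := fun x => decide (3 ≤ x)) (hf := fun _ _ => rfl), List.unattach_attach] at ih
    intro h
    have ha2 := oddL_head h
    have ha3 : 3 ≤ a := by omega
    have hd := ih (oddL_filter_map h)
    have h3 := List.length_filter_le (fun x => decide (3 ≤ x)) t
    rw [phi_cons _ ha]
    constructor
    · refine List.isChain_iff_pairwise.1 ?_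
      rw [List.isChain_cons_cons]
      constructor
      · omega
      · rw [List.isChain_cons]
        refine ⟨?_, List.isChain_iff_pairwise.2 hd.1⟩
        intro z hz
        -- z is the head of phi lam; analyze F
        rcases hF : t.filter (fun x => 3 ≤ x) with _ | ⟨f1, F'⟩
        · rw [hF] at hz; simp [phi] at hz
        · rw [hF] at hz
          simp only [List.map_cons] at hz
          rw [phi_head] at hz
          have hf1 : f1 ∈ t.filter (fun x => 3 ≤ x) := by rw [hF]; simp
          simp only [List.mem_filter, decide_eq_true_eq] at hf1
          have hf1a : f1 ≤ a := oddL_le h _ hf1.1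
          have hflen : (t.filter (fun x => 3 ≤ x)).length = F'.length + 1 := by
            rw [hF]; simp
          simp only [Option.mem_def, Option.some.injEq] at hz
          subst hz
          simp only [List.length_map]
          have hf2 : f1 % 2 = 1 := (oddL_tail h).2 f1 hf1.1
          omega
    · intro x hx
      simp only [List.mem_cons] at hx
      rcases hx with rfl | rfl | hx
      · omega
      · omega
      · exact hd.2 x hx


lemma oddL_all_one {t : List ℕ} (h : OddL (1 :: t)) : ∀ b ∈ (1:ℕ) :: t, b = 1 := by
  intro b hb
  rcases List.mem_cons.1 hb with rfl | hb
  · rfl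
  · have := oddL_le h b hb
    have := (oddL_tail h).2 b hb
    omega

lemma t_decomp : ∀ t : List ℕ, OddL t →
    t = t.filter (fun x => 3 ≤ x) ++
      List.replicate (t.length - (t.filter (fun x => 3 ≤ x)).length) 1 := by
  intro t
  induction t with
  | nil => simp
  | cons x t ih =>
    intro h
    have hx := oddL_head h
    by_cases h3 : 3 ≤ x
    · have ihh := ih (oddL_tail h)
      rw [List.filter_cons_of_pos (by simp [h3])]
      simp only [List.cons_append, List.length_cons, Nat.succ_sub_succ]
      exact congrArg (List.cons x) ihh
    · have hx1 : x = 1 := by omega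
      subst hx1
      have hall := oddL_all_one h
      have hfe : (1 :: t).filter (fun x => 3 ≤ x) = [] := by
        apply List.filter_eq_nil_iff.2
        intro b hb
        rw [hall b hb]
        simp
      rw [hfe]
      simp only [List.nil_append, List.length_nil, Nat.sub_zero, List.length_cons]
      conv_lhs => rw [all_ones h]
      rw [← List.replicate_succ]

lemma cL_pos : ∀ l : List ℕ, l ≠ [] → 1 ≤ cL l := by
  intro l
  induction l using cL.induct with
  | case1 => intro hc; simp at hc
  | case2 x => intro _; simp [cL]
  | case3 x y r ih =>
    intro _
    have := ih (by simp)
    rw [cL]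
    omega

lemma cL_cons_cons (x y : ℕ) (r : List ℕ) :
    cL (x :: y :: r) = (if y + 1 < x then 1 else 0) + cL (y :: r) := by
  rw [cL]

lemma cL_phi : ∀ l : List ℕ, OddL l → cL (phi l) = l.toFinset.card := by
  intro l
  induction l using phi.induct with
  | case1 => simp [phi, cL]
  | case2 t =>
    intro h
    rw [phi_one]
    have hset : ((1:ℕ) :: t).toFinset = {1} := by
      ext x
      simp only [List.mem_toFinset, Finset.mem_singleton]
      constructor
      · exact fun hx => oddL_all_one h x hx
      · intro hx; subst hx; simp
    rw [hset]
    simp [cL]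
  | case3 a t ha ih =>
    simp only [List.map_subtype, List.unattach_filter (p := (· ∈ t)) (f := fun x => decide (3 ≤ x.1)) (g := fun x => decide (3 ≤ x)) (hf := fun _ _ => rfl), List.unattach_attach] at ih
    intro h
    have ha2 := oddL_head h
    have ha3 : 3 ≤ a := by omega
    have ht := oddL_tail h
    have hlf := List.length_filter_le (fun x => decide (3 ≤ x)) t
    rw [phi_cons _ ha]
    rcases hF : t.filter (fun x => 3 ≤ x) with _ | ⟨f1, F'⟩
    · -- no parts ≥ 3 in t : all parts of t equal 1
      have hall : ∀ b ∈ t, b = 1 := by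
        intro b hb
        have hb2 := ht.2 b hb
        have : ¬ (3 ≤ b) := by
          intro h3
          have : b ∈ t.filter (fun x => 3 ≤ x) := List.mem_filter.2 ⟨hb, by simpa⟩
          rw [hF] at this
          simp at this
        omega
      rw [hF]
      simp only [List.map_nil, List.length_nil, Nat.add_zero]
      rw [phi_nil]
      have hha : (a + 1) / 2 = (a - 1) / 2 + 1 := by omega
      cases t with
      | nil =>
        simp only [List.length_nil, Nat.add_zero]
        rw [cL_cons_cons, if_neg (by omega)]
        simp [cL]
      | cons u t' =>
        have hu1 : u = 1 := hall u (by simp)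
        rw [cL_cons_cons, if_pos (by simp only [List.length_cons]; omega)]
        simp only [cL]
        have hset : (a :: u :: t').toFinset = {a, 1} := by
          ext x
          simp only [List.mem_toFinset, List.mem_cons, Finset.mem_insert, Finset.mem_singleton]
          constructor
          · rintro (rfl | hx)
            · left; rfl
            · right; exact hall x (List.mem_cons.2 hx)
          · rintro (rfl | rfl)
            · left; rfl
            · right; left; exact hu1.symm
        rw [hset]
        rw [Finset.card_insert_of_notMem (by simp; omega), Finset.card_singleton]
    · -- F = f1 :: F'
      have hmemF : ∀ x, x ∈ f1 :: F' ↔ (x ∈ t ∧ 3 ≤ x) := by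
        intro x
        rw [← hF]
        simp [List.mem_filter]
      have hf1 := (hmemF f1).1 (by simp)
      have hf1o : f1 % 2 = 1 := ht.2 f1 hf1.1
      have hf1a : f1 ≤ a := oddL_le h f1 hf1.1
      have hFs : (f1 :: F').Pairwise (· ≥ ·) := hF ▸ (ht.1.filter _)
      have hlen : (t.filter (fun x => 3 ≤ x)).length = F'.length + 1 := by rw [hF]; simp
      rw [hF]
      simp only [List.map_cons]
      rcases hphi : phi ((f1 - 2) :: F'.map (fun x => x - 2)) with _ | ⟨h', ρ⟩
      · exact absurd hphi (phi_ne_nil _ _)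
      · have hh' : h' = (f1 - 2 + 1) / 2 + F'.length := by
          have := phi_head (f1 - 2) (F'.map (fun x => x - 2))
          rw [hphi] at this
          simp only [List.head?_cons, Option.some.injEq, List.length_map] at this
          omega
        rw [cL_cons_cons, cL_cons_cons]
        rw [← hphi]
        have hIH := ih (oddL_filter_map h)
        rw [hF] at hIH
        simp only [List.map_cons] at hIH
        rw [hIH]
        -- now pure counting
        have hA1 : 1 ∈ t ↔ F'.length + 1 < t.length := by
          rw [one_mem_iff ht.2, hlen]
        have hA2 : a ∈ t ↔ f1 = a := by
          constructor
          · intro hat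
            have h1 : a ∈ f1 :: F' := (hmemF a).2 ⟨hat, ha3⟩
            rcases List.mem_cons.1 h1 with h2 | h2
            · exact h2.symm
            · have := List.rel_of_pairwise_cons hFs h2
              omega
          · intro he; subst he; exact hf1.1
        have hC1 : (((f1 - 2) :: F'.map (fun x => x - 2)).toFinset).card
            = ((f1 :: F').toFinset).card := by
          have himg : ((f1 - 2) :: F'.map (fun x => x - 2)).toFinset
              = (f1 :: F').toFinset.image (fun x => x - 2) := by
            ext x
            simp [List.mem_map, List.mem_cons]
          rw [himg]
          apply Finset.card_image_of_injOn
          intro u hu v hv huv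
          simp only [Finset.coe_insert, Set.mem_insert_iff, Finset.mem_coe,
            List.coe_toFinset, Set.mem_setOf_eq, List.mem_toFinset] at hu hv
          have hu3 : 3 ≤ u := ((hmemF u).1 (by simpa using hu)).2
          have hv3 : 3 ≤ v := ((hmemF v).1 (by simpa using hv)).2
          simp only at huv
          omega
        have hC2 : t.toFinset.card
            = ((f1 :: F').toFinset).card + (if 1 ∈ t then 1 else 0) := by
          by_cases h1t : 1 ∈ t
          · rw [if_pos h1t]
            have hset : t.toFinset = insert 1 ((f1 :: F').toFinset) := by
              ext x
              simp only [List.mem_toFinset, Finset.mem_insert]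
              constructor
              · intro hx
                have := ht.2 x hx
                by_cases h3 : 3 ≤ x
                · right; exact (hmemF x).2 ⟨hx, h3⟩
                · left; omega
              · rintro (rfl | hx)
                · exact h1t
                · exact ((hmemF x).1 hx).1
            rw [hset, Finset.card_insert_of_notMem]
            intro hc
            have := ((hmemF 1).1 (List.mem_toFinset.1 hc)).2
            omega
          · rw [if_neg h1t, Nat.add_zero]
            congr 1
            ext x
            simp only [List.mem_toFinset]
            constructor
            · intro hx
              have := ht.2 x hx
              by_cases h3 : 3 ≤ x
              · exact (hmemF x).2 ⟨hx, h3⟩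
              · have hx1 : x = 1 := by omega
                subst hx1
                exact absurd hx h1t
            · intro hx; exact ((hmemF x).1 hx).1
        have hC3 : ((a :: t).toFinset).card
            = t.toFinset.card + (if a ∈ t then 0 else 1) := by
          rw [List.toFinset_cons]
          by_cases hat : a ∈ t
          · rw [if_pos hat, Finset.insert_eq_self.2 (List.mem_toFinset.2 hat)]
            omega
          · rw [if_neg hat, Finset.card_insert_of_notMem (by simpa using hat)]
        rw [hC3, hC2]
        simp only [List.length_cons]
        have hha : (a + 1) / 2 = (a - 1) / 2 + 1 := by omega
        have hhf : (f1 - 2 + 1) / 2 + 1 = (f1 - 1) / 2 + 1 := by omega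
        have hhf2 : (f1 - 1) / 2 ≤ (a - 1) / 2 := by omega
        have hfa : f1 = a → (f1 - 1) / 2 = (a - 1) / 2 := by omega
        have htlen : F'.length + 1 ≤ t.length := by omega
        by_cases h1t : 1 ∈ t <;> by_cases hat : a ∈ t
        · have h1 := hA2.1 hat
          have h2 := hA1.1 h1t
          rw [if_pos h1t, if_pos hat, if_pos (by omega), if_neg (by have := hfa h1; omega)]
          omega
        · have h1 : ¬ f1 = a := fun hc => hat (hA2.2 hc)
          have h2 := hA1.1 h1t
          rw [if_pos h1t, if_neg hat, if_pos (by omega),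
            if_pos (by have hlt : f1 < a := lt_of_le_of_ne hf1a h1; omega)]
          omega
        · have h1 := hA2.1 hat
          have h2 : ¬ (F'.length + 1 < t.length) := fun hc => h1t (hA1.2 hc)
          rw [if_neg h1t, if_pos hat, if_neg (by omega), if_neg (by have := hfa h1; omega)]
          omega
        · have h1 : ¬ f1 = a := fun hc => hat (hA2.2 hc)
          have h2 : ¬ (F'.length + 1 < t.length) := fun hc => h1t (hA1.2 hc)
          rw [if_neg h1t, if_neg hat, if_neg (by omega),
            if_pos (by have hlt : f1 < a := lt_of_le_of_ne hf1a h1; omega)]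
          omega

lemma psi_phi : ∀ l : List ℕ, OddL l → psi (phi l) = l := by
  intro l
  induction l using phi.induct with
  | case1 => simp [phi, psi]
  | case2 t =>
    intro h
    rw [phi_one]
    show List.replicate (t.length + 1) 1 = 1 :: t
    rw [List.replicate_succ]
    exact congrArg (List.cons 1) (all_ones h).symm
  | case3 a t ha ih =>
    simp only [List.map_subtype, List.unattach_filter (p := (· ∈ t)) (f := fun x => decide (3 ≤ x.1)) (g := fun x => decide (3 ≤ x)) (hf := fun _ _ => rfl), List.unattach_attach] at ih
    intro h
    have ha2 := oddL_head h
    have ha3 : 3 ≤ a := by omega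
    have ht := oddL_tail h
    have hlf := List.length_filter_le (fun x => decide (3 ≤ x)) t
    have hIH := ih (oddL_filter_map h)
    rw [phi_cons _ ha]
    show psi (_ :: _ :: phi _) = _
    rw [psi]
    rw [hIH]
    simp only [List.length_map]
    have e1 : (a - 1) / 2 + (t.filter (fun x => 3 ≤ x)).length
        - (t.filter (fun x => 3 ≤ x)).length = (a - 1) / 2 := by omega
    rw [e1]
    have e2 : 2 * ((a - 1) / 2) + 1 = a := by omega
    rw [e2]
    have e3 : ((t.filter (fun x => 3 ≤ x)).map (fun x => x - 2)).map (fun v => v + 2)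
        = t.filter (fun x => 3 ≤ x) := by
      rw [List.map_map]
      have : ∀ x ∈ t.filter (fun x => 3 ≤ x), ((fun v => v + 2) ∘ fun x => x - 2) x = id x := by
        intro x hx
        simp only [List.mem_filter, decide_eq_true_eq] at hx
        simp only [Function.comp_apply, id_eq]
        omega
      rw [List.map_congr_left this, List.map_id]
    rw [e3]
    have e4 : (a + 1) / 2 + t.length - (a - 1) / 2 - 1 - (t.filter (fun x => 3 ≤ x)).length
        = t.length - (t.filter (fun x => 3 ≤ x)).length := by omega
    rw [e4]
    exact congrArg (List.cons a) (t_decomp t ht).symm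


lemma sorted_ge_head {l : List ℕ} (h : l.Pairwise (· ≥ ·)) {x : ℕ} (hx : x ∈ l) :
    x ≤ l.headD 0 := by
  cases l with
  | nil => simp at hx
  | cons a t =>
    rcases List.mem_cons.1 hx with rfl | hx
    · simp
    · exact List.rel_of_pairwise_cons h hx

lemma psi_nil : psi [] = [] := rfl

lemma psi_spec : ∀ l : List ℕ, DistL l →
    OddL (psi l) ∧ phi (psi l) = l ∧
    ((psi l).length + l.getD 1 0 = l.headD 0 + (psi (l.drop 2)).length) ∧
    (psi l).length ≤ l.headD 0 ∧
    (l ≠ [] → (psi l).headD 0 + 2 * (psi (l.drop 2)).length = 2 * l.getD 1 0 + 1) := by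
  intro l
  induction l using psi.induct with
  | case1 =>
    intro _
    refine ⟨⟨by simp [psi], by simp [psi]⟩, by simp [psi, phi], by simp [psi], by simp [psi], by simp⟩
  | case2 x =>
    intro hd
    have hx : 0 < x := hd.2 x (by simp)
    obtain ⟨x', rfl⟩ : ∃ x', x = x' + 1 := ⟨x - 1, by omega⟩
    show (OddL (List.replicate (x' + 1) 1)) ∧ _ ∧ _ ∧ _ ∧ _
    have hone : OddL (List.replicate (x' + 1) 1) := by
      constructor
      · exact List.pairwise_replicate.2 (Or.inr le_rfl)
      · intro z hz
        rw [List.mem_replicate] at hz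
        omega
    refine ⟨hone, ?_, ?_, ?_, ?_⟩
    · show phi (List.replicate (x' + 1) 1) = _
      rw [List.replicate_succ, phi_one, List.length_replicate]
    · simp [psi]
    · simp [psi]
    · intro _
      show (List.replicate (x' + 1) 1).headD 0 + 2 * (psi ([x' + 1].drop 2)).length = _
      rw [List.replicate_succ]
      simp [psi]
  | case3 x y r ih =>
    intro hd
    have hsc := List.pairwise_cons.1 hd.1
    have hsc2 := List.pairwise_cons.1 hsc.2
    have hxy : x > y := hsc.1 y (by simp)
    have hdyr : DistL (y :: r) := ⟨hsc.2, fun z hz => hd.2 z (by simp [hz])⟩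
    have hdr : DistL r := ⟨hsc2.2, fun z hz => hdyr.2 z (by simp [hz])⟩
    have hy : 0 < y := hdyr.2 y (by simp)
    obtain ⟨hO, hP2, hC3, hC4, hC5⟩ := ih hdr
    have hcy : (psi r).length < y := by
      cases r with
      | nil => rw [psi_nil]; simpa using hy
      | cons z r' =>
        have hz : y > z := hsc2.1 z (by simp)
        have : (psi (z :: r')).length ≤ z := by simpa using hC4
        omega
    set L := psi r with hL
    set c := L.length with hc
    have hb1 : 1 ≤ y - c := by omega
    have hhead : ∀ w ∈ L, w + 2 ≤ 2 * (y - c) + 1 := by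
      intro w hw
      have hwh := sorted_ge_head hO.1 hw
      have hrne : r ≠ [] := by
        intro hre
        rw [hre] at hL
        rw [hL] at hw
        simp [psi_nil] at hw
      have h5 := hC5 hrne
      have hhy : r.headD 0 < y := by
        cases r with
        | nil => exact absurd rfl hrne
        | cons z r' => exact hsc2.1 z (by simp)
      omega
    have hkx : y + 1 ≤ x := by omega
    refine ⟨?_, ?_, ?_, ?_, ?_⟩
    · -- OddL (psi (x :: y :: r))
      rw [psi, ← hL, ← hc]
      constructor
      · apply List.pairwise_cons.2
        constructor
        · intro z hz
          rcases List.mem_append.1 hz with hz | hz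
          · obtain ⟨w, hw, rfl⟩ := List.mem_map.1 hz
            exact hhead w hw
          · rw [List.mem_replicate] at hz
            omega
        · apply List.pairwise_append.2
          refine ⟨List.Pairwise.map _ (fun a b hab => by omega) hO.1,
            List.pairwise_replicate.2 (Or.inr le_rfl), ?_⟩
          intro u hu v hv
          obtain ⟨w, hw, rfl⟩ := List.mem_map.1 hu
          rw [List.mem_replicate] at hv
          omega
      · intro z hz
        rcases List.mem_cons.1 hz with rfl | hz
        · omega
        rcases List.mem_append.1 hz with hz | hz
        · obtain ⟨w, hw, rfl⟩ := List.mem_map.1 hz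
          have := hO.2 w hw
          omega
        · rw [List.mem_replicate] at hz
          omega
    · -- phi (psi (x :: y :: r)) = x :: y :: r
      rw [psi, ← hL, ← hc]
      have hfilter : ((L.map (fun v => v + 2)) ++
          List.replicate (x - (y - c) - 1 - c) 1).filter (fun v => 3 ≤ v)
          = L.map (fun v => v + 2) := by
        rw [List.filter_append]
        have h1 : (L.map (fun v => v + 2)).filter (fun v => 3 ≤ v) = L.map (fun v => v + 2) :=
          List.filter_eq_self.2 (fun z hz => by
            obtain ⟨w, hw, rfl⟩ := List.mem_map.1 hz
            have := hO.2 w hw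
            simp only [decide_eq_true_eq]
            omega)
        have h2 : (List.replicate (x - (y - c) - 1 - c) 1).filter (fun v : ℕ => 3 ≤ v) = [] :=
          List.filter_eq_nil_iff.2 (fun z hz => by
            rw [List.mem_replicate] at hz
            simp only [decide_eq_true_eq]
            omega)
        rw [h1, h2, List.append_nil]
      rw [phi_cons _ (by omega), hfilter]
      have hmapback : (L.map (fun v => v + 2)).map (fun v => v - 2) = L := by
        rw [List.map_map]
        have : ∀ w ∈ L, ((fun v => v - 2) ∘ fun v => v + 2) w = id w := by
          intro w hw
          simp
        rw [List.map_congr_left this, List.map_id]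
      rw [hmapback, hP2]
      simp only [List.length_append, List.length_map, List.length_replicate, ← hc]
      congr 1
      · omega
      congr 1
      · omega
    · rw [psi, ← hL, ← hc]
      simp only [List.length_cons, List.length_append, List.length_map, List.length_replicate]
      show _ + y = x + c
      omega
    · rw [psi, ← hL, ← hc]
      simp only [List.length_cons, List.length_append, List.length_map, List.length_replicate]
      show _ ≤ x
      omega
    · intro _
      rw [psi, ← hL, ← hc]
      show 2 * (y - c) + 1 + 2 * c = 2 * y + 1
      omega


lemma cL_eq : ∀ l : List ℕ, l.Pairwise (· > ·) →
    (l.toFinset.filter (fun i => i + 1 ∉ l)).card = cL l := by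
  intro l
  induction l using cL.induct with
  | case1 => intro _; simp [cL]
  | case2 x =>
    intro _
    rw [cL]
    rw [List.toFinset_cons, List.toFinset_nil, LawfulSingleton.insert_empty_eq]
    rw [Finset.filter_singleton, if_pos (by simp)]
    simp
  | case3 x y r ih =>
    intro h
    have hsc := List.pairwise_cons.1 h
    have hyr := hsc.2
    have hxall := hsc.1
    have hybound : ∀ i ∈ y :: r, i ≤ y := by
      intro i hi
      rcases List.mem_cons.1 hi with rfl | hi
      · exact le_rfl
      · exact le_of_lt (List.rel_of_pairwise_cons hyr hi)
    have hIH := ih hyr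
    rw [List.toFinset_cons, Finset.filter_insert, if_pos ?hpx]
    case hpx =>
      intro hc
      rcases List.mem_cons.1 hc with hc | hc
      · omega
      · have := hxall _ hc
        omega
    rw [Finset.card_insert_of_notMem ?hnm]
    case hnm =>
      intro hc
      have := (Finset.mem_filter.1 hc).1
      have := hxall x (List.mem_toFinset.1 this)
      omega
    rw [cL_cons_cons]
    by_cases hxy1 : x = y + 1
    · have herase : ((y :: r).toFinset.filter (fun i => i + 1 ∉ x :: y :: r))
          = ((y :: r).toFinset.filter (fun i => i + 1 ∉ y :: r)).erase y := by
        ext i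
        simp only [Finset.mem_filter, Finset.mem_erase, List.mem_cons, List.mem_toFinset]
        constructor
        · rintro ⟨h1, h2⟩
          push_neg at h2
          exact ⟨by omega, h1, by push_neg; exact ⟨h2.2.1, h2.2.2⟩⟩
        · rintro ⟨h1, h2, h3⟩
          push_neg at h3
          refine ⟨h2, ?_⟩
          push_neg
          exact ⟨by omega, h3.1, h3.2⟩
      rw [herase, Finset.card_erase_of_mem ?hymem]
      case hymem =>
        rw [Finset.mem_filter]
        refine ⟨by simp, ?_⟩
        intro hc
        rcases List.mem_cons.1 hc with hc | hc
        · omega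
        · have := List.rel_of_pairwise_cons hyr hc
          omega
      rw [hIH, if_neg (by omega)]
      have := cL_pos (y :: r) (by simp)
      omega
    · have hxy : y < x := hxall y (by simp)
      have heq : ((y :: r).toFinset.filter (fun i => i + 1 ∉ x :: y :: r))
          = ((y :: r).toFinset.filter (fun i => i + 1 ∉ y :: r)) := by
        apply Finset.filter_congr
        intro i hi
        have hiy := hybound i (List.mem_toFinset.1 hi)
        simp only [List.mem_cons]
        constructor
        · intro hc
          push_neg at hc
          push_neg
          exact ⟨hc.2.1, hc.2.2⟩
        · intro hc
          push_neg at hc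
          push_neg
          exact ⟨by omega, hc.1, hc.2⟩
      rw [heq, hIH, if_pos (by omega)]
      omega


variable {n : ℕ}

lemma sortedParts_sorted (p : n.Partition) : (sortedParts p).Pairwise (· ≥ ·) := by
  have h := Multiset.pairwise_sort (s := p.parts) (r := (· ≤ ·))
  exact List.pairwise_reverse.2 h

lemma sortedParts_coe (p : n.Partition) :
    ((sortedParts p : List ℕ) : Multiset ℕ) = p.parts := by
  rw [sortedParts, Multiset.coe_reverse, Multiset.sort_eq]

lemma mem_sortedParts (p : n.Partition) (x : ℕ) : x ∈ sortedParts p ↔ x ∈ p.parts := by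
  rw [← sortedParts_coe p]
  exact Iff.rfl

lemma sum_sortedParts (p : n.Partition) : (sortedParts p).sum = n := by
  have h := p.parts_sum
  rw [← sortedParts_coe p, Multiset.sum_coe] at h
  exact h

def ofList (l : List ℕ) (hpos : ∀ x ∈ l, 0 < x) (hsum : l.sum = n) : n.Partition where
  parts := (l : Multiset ℕ)
  parts_pos := fun hi => hpos _ hi
  parts_sum := by rwa [Multiset.sum_coe]

lemma ofList_parts (l : List ℕ) (hpos : ∀ x ∈ l, 0 < x) (hsum : l.sum = n) :
    (ofList l hpos hsum).parts = (l : Multiset ℕ) := rfl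

lemma sortedParts_ofList {l : List ℕ} (hs : l.Pairwise (· ≥ ·))
    (hpos : ∀ x ∈ l, 0 < x) (hsum : l.sum = n) :
    sortedParts (ofList l hpos hsum) = l := by
  rw [sortedParts]
  have h1 : Multiset.sort (l : Multiset ℕ) (· ≤ ·) = l.reverse := by
    have h2 : (↑(Multiset.sort (l : Multiset ℕ) (· ≤ ·)) : Multiset ℕ) = (l : Multiset ℕ) :=
      Multiset.sort_eq _ _
    have hperm : List.Perm (Multiset.sort (l : Multiset ℕ) (· ≤ ·)) l.reverse :=
      (Multiset.coe_eq_coe.1 h2).trans (l.reverse_perm).symm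
    exact List.Perm.eq_of_pairwise' (Multiset.pairwise_sort (s := (l : Multiset ℕ)) (r := (· ≤ ·)))
      (List.pairwise_reverse.2 hs) hperm
  show ((Multiset.sort ((ofList l hpos hsum).parts) (· ≤ ·)).reverse) = l
  rw [ofList_parts, h1, List.reverse_reverse]

lemma distL_sortedParts {q : n.Partition} (hq : q.parts.Nodup) : DistL (sortedParts q) := by
  constructor
  · have hnd : (sortedParts q).Nodup := by
      rw [← Multiset.coe_nodup, sortedParts_coe]
      exact hq
    have hs := sortedParts_sorted q
    exact ((hs : List.Pairwise _ _).and hnd).imp (fun hab => by omega)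
  · intro x hx
    exact q.parts_pos ((mem_sortedParts q x).1 hx)

lemma oddL_sortedParts {p : n.Partition} (hp : ∀ i ∈ p.parts, Odd i) :
    OddL (sortedParts p) :=
  ⟨sortedParts_sorted p, fun x hx => Nat.odd_iff.1 (hp x ((mem_sortedParts p x).1 hx))⟩

lemma nd_eq (p : n.Partition) : nd p = (sortedParts p).toFinset.card := by
  rw [nd, ← sortedParts_coe p, List.toFinset_coe]

lemma nc_eq (q : n.Partition) :
    nc q = ((sortedParts q).toFinset.filter (fun i => i + 1 ∉ sortedParts q)).card := by
  rw [nc]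
  have h1 : q.parts.toFinset = (sortedParts q).toFinset := by
    rw [← sortedParts_coe q, List.toFinset_coe]
  rw [h1]
  apply Finset.card_bij (fun a _ => a) <;> simp_all [mem_sortedParts]

end Syl

theorem sylvester_refinement (n k : ℕ) :
    Nat.card {p : n.Partition // p.parts.Nodup ∧ nc p = k} =
      Nat.card {p : n.Partition // (∀ i ∈ p.parts, Odd i) ∧ nd p = k} := by
  apply Nat.card_congr
  refine
    { toFun := fun q =>
        ⟨Syl.ofList (Syl.psi (sortedParts q.1))
          (fun x hx => by
            have := (Syl.psi_spec _ (Syl.distL_sortedParts q.2.1)).1.2 x hx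
            omega)
          (by
            have hS := Syl.psi_spec _ (Syl.distL_sortedParts q.2.1)
            have h1 := Syl.sum_phi _ hS.1
            rw [hS.2.1] at h1
            rw [← h1]
            exact Syl.sum_sortedParts q.1), ?_, ?_⟩,
      invFun := fun p =>
        ⟨Syl.ofList (Syl.phi (sortedParts p.1))
          (fun x hx => (Syl.distL_phi _ (Syl.oddL_sortedParts p.2.1)).2 x hx)
          (by
            rw [Syl.sum_phi _ (Syl.oddL_sortedParts p.2.1)]
            exact Syl.sum_sortedParts p.1), ?_, ?_⟩,
      left_inv := ?_,
      right_inv := ?_ }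
  · -- all parts odd
    intro i hi
    rw [Syl.ofList_parts, Multiset.mem_coe] at hi
    exact Nat.odd_iff.2 ((Syl.psi_spec _ (Syl.distL_sortedParts q.2.1)).1.2 i hi)
  · -- nd = k
    have hS := Syl.psi_spec _ (Syl.distL_sortedParts q.2.1)
    rw [Syl.nd_eq, Syl.sortedParts_ofList hS.1.1]
    have h1 := Syl.cL_phi _ hS.1
    rw [hS.2.1] at h1
    rw [← h1]
    have hk := q.2.2
    rw [Syl.nc_eq, Syl.cL_eq _ (Syl.distL_sortedParts q.2.1).1] at hk
    exact hk
  · -- nodup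
    rw [Syl.ofList_parts, Multiset.coe_nodup]
    exact ((Syl.distL_phi _ (Syl.oddL_sortedParts p.2.1)).1 :
      List.Pairwise _ _).imp (fun hab => by omega)
  · -- nc = k
    have hD := Syl.distL_phi _ (Syl.oddL_sortedParts p.2.1)
    rw [Syl.nc_eq, Syl.sortedParts_ofList (hD.1.imp (fun hab => le_of_lt hab)),
      Syl.cL_eq _ hD.1, Syl.cL_phi _ (Syl.oddL_sortedParts p.2.1)]
    rw [← Syl.nd_eq]
    exact p.2.2
  · -- left inverse
    intro q
    apply Subtype.ext
    apply Nat.Partition.ext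
    have hS := Syl.psi_spec _ (Syl.distL_sortedParts q.2.1)
    rw [Syl.ofList_parts, Syl.sortedParts_ofList hS.1.1, hS.2.1, Syl.sortedParts_coe]
  · -- right inverse
    intro p
    apply Subtype.ext
    apply Nat.Partition.ext
    have hO := Syl.oddL_sortedParts p.2.1
    have hD := Syl.distL_phi _ hO
    rw [Syl.ofList_parts, Syl.sortedParts_ofList (hD.1.imp (fun hab => le_of_lt hab)),
      Syl.psi_phi _ hO, Syl.sortedParts_coe]
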